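/- Let h = (h_1, …, h_n) ∈ ℤ^n be such that every partial sum η_m = h_1 + ⋯ + h_m (1 ≤ m ≤ n) is nonnegative. Then the map Φ sending an integral flow f ∈ I(h) to the assignment c with c_{i,j−1} = f(i,j) for all 1 ≤ i < j ≤ n+1 is a well-defined bijection from I(h) onto the set of Kostant pictures of height η = (η_1, …, η_n), and Φ is an isomorphism of partially ordered sets from the merge order on I(h) to the merge order on Kostant pictures of height η (identified with Lusztig data via a_{ij} = c_{ij}). -/

import Mathlib

open Filter

/-- A Kostant picture of height `η`. -/
def IsKostant {w : ℕ} (η : Fin w → ℕ) (c : Fin w → Fin w → ℕ) : Prop :=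
  (∀ i j : Fin w, j < i → c i j = 0) ∧
  ∀ m : Fin w, (∑ i : Fin w, ∑ j : Fin w, (if i ≤ m ∧ m ≤ j then c i j else 0)) = η m

/-- Kostant's partition function. -/
noncomputable def KPF {w : ℕ} (η : Fin w → ℕ) : ℕ :=
  Set.ncard {c : Fin w → Fin w → ℕ | IsKostant η c}

/-- `L[h,w] = ln KPF[(h,…,h)]` for the constant tuple of length `w`. -/
noncomputable def Lbox (h w : ℕ) : ℝ := Real.log (KPF (fun _ : Fin w => h))


/-- An integral flow with net flow `(h, -∑ h)`: a nonnegative integer `f i j` on every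
pair `i < j` of `Fin (n+1)` (zero otherwise) such that for each `k ≤ n` the net outflow
at `k` is `h k`. -/
def IsFlow {n : ℕ} (h : Fin n → ℤ) (f : Fin (n + 1) → Fin (n + 1) → ℕ) : Prop :=
  (∀ i j : Fin (n + 1), ¬i < j → f i j = 0) ∧
  ∀ k : Fin n,
    (∑ j : Fin (n + 1), if k.castSucc < j then (f k.castSucc j : ℤ) else 0) -
      (∑ i : Fin (n + 1), if i < k.castSucc then (f i k.castSucc : ℤ) else 0) = h k

/-- Merge covering relation on integral flows: `f` covers `f'` iff they agree except
`f i j = f' i j + 1`, `f j k = f' j k + 1`, `f i k = f' i k - 1` for a single triple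
`i < j < k`. -/
def FlowCover {n : ℕ} (f' f : Fin (n + 1) → Fin (n + 1) → ℕ) : Prop :=
  ∃ i j k : Fin (n + 1), i < j ∧ j < k ∧
    f i j = f' i j + 1 ∧ f j k = f' j k + 1 ∧ f i k + 1 = f' i k ∧
    ∀ p q : Fin (n + 1),
      (p, q) ≠ (i, j) → (p, q) ≠ (j, k) → (p, q) ≠ (i, k) → f p q = f' p q

/-- Merge covering relation on Kostant pictures (written in Lusztig data coordinates
`a i j = c i j`): `b` is covered by `a` iff they agree except `b i j = a i j - 1`,
`b (j+1) k = a (j+1) k - 1`, `b i k = a i k + 1` for a single triple `i ≤ j < k`. -/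
def KostantCover {n : ℕ} (b a : Fin n → Fin n → ℕ) : Prop :=
  ∃ (i j k : ℕ) (hi : i < n) (hj : j < n) (hj1 : j + 1 < n) (hk : k < n),
    i ≤ j ∧ j < k ∧
    b ⟨i, hi⟩ ⟨j, hj⟩ + 1 = a ⟨i, hi⟩ ⟨j, hj⟩ ∧
    b ⟨j + 1, hj1⟩ ⟨k, hk⟩ + 1 = a ⟨j + 1, hj1⟩ ⟨k, hk⟩ ∧
    b ⟨i, hi⟩ ⟨k, hk⟩ = a ⟨i, hi⟩ ⟨k, hk⟩ + 1 ∧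
    ∀ p q : Fin n, ((p : ℕ), (q : ℕ)) ≠ (i, j) → ((p : ℕ), (q : ℕ)) ≠ (j + 1, k) →
      ((p : ℕ), (q : ℕ)) ≠ (i, k) → b p q = a p q

/-- The map `Φ` sending a flow `f` to the assignment `c` with `c_{i,j-1} = f(i,j)`. -/
def flowToKostant {n : ℕ} (f : Fin (n + 1) → Fin (n + 1) → ℕ) : Fin n → Fin n → ℕ :=
  fun i j => if i ≤ j then f i.castSucc j.succ else 0



/-- The inverse map `Ψ`. -/
def kostantToFlow {n : ℕ} (c : Fin n → Fin n → ℕ) : Fin (n + 1) → Fin (n + 1) → ℕ :=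
  fun i j => if hij : i < j then
    c ⟨i.val, by have h1 := Fin.lt_def.mp hij; have h2 := j.isLt; omega⟩
      ⟨j.val - 1, by have h1 := Fin.lt_def.mp hij; have h2 := j.isLt; omega⟩
  else 0

lemma ftk_mk {n : ℕ} (f : Fin (n + 1) → Fin (n + 1) → ℕ) (i j : Fin (n + 1)) (hij : i < j)
    (hi : i.val < n) (hj : j.val - 1 < n) :
    flowToKostant f ⟨i.val, hi⟩ ⟨j.val - 1, hj⟩ = f i j := by
  have h1 := Fin.lt_def.mp hij
  simp only [flowToKostant]
  rw [if_pos (by simp only [Fin.le_def]; omega)]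
  have e1 : (⟨i.val, hi⟩ : Fin n).castSucc = i := Fin.ext rfl
  have e2 : (⟨j.val - 1, hj⟩ : Fin n).succ = j := Fin.ext (by simp only [Fin.val_succ]; omega)
  rw [e1, e2]

lemma ktf_mk {n : ℕ} (c : Fin n → Fin n → ℕ) {i j : ℕ} (hi : i < n) (hj : j < n)
    (hij : i ≤ j) (hi' : i < n + 1) (hj' : j + 1 < n + 1) :
    kostantToFlow c ⟨i, hi'⟩ ⟨j + 1, hj'⟩ = c ⟨i, hi⟩ ⟨j, hj⟩ := by
  have hlt : (⟨i, hi'⟩ : Fin (n + 1)) < ⟨j + 1, hj'⟩ := by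
    simp only [Fin.lt_def]; omega
  simp only [kostantToFlow, dif_pos hlt]
  exact congrArg₂ c (Fin.ext rfl) (Fin.ext (by simp))

lemma ktf_castSucc {n : ℕ} (c : Fin n → Fin n → ℕ) (i j : Fin n) (hij : i ≤ j) :
    kostantToFlow c i.castSucc j.succ = c i j := by
  have h1 : i.castSucc = (⟨i.val, by omega⟩ : Fin (n + 1)) := rfl
  have h2 : j.succ = (⟨j.val + 1, by omega⟩ : Fin (n + 1)) := rfl
  rw [h1, h2, ktf_mk c i.isLt j.isLt hij]

lemma kostant_flow_inv {n : ℕ} (f : Fin (n + 1) → Fin (n + 1) → ℕ)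
    (hz : ∀ i j : Fin (n + 1), ¬i < j → f i j = 0) :
    kostantToFlow (flowToKostant f) = f := by
  funext i j
  simp only [kostantToFlow]
  split
  · rename_i hij
    exact ftk_mk f i j hij _ _
  · rename_i hij
    exact (hz i j hij).symm

lemma flow_kostant_inv {n : ℕ} (c : Fin n → Fin n → ℕ)
    (hz : ∀ i j : Fin n, j < i → c i j = 0) :
    flowToKostant (kostantToFlow c) = c := by
  funext i j
  simp only [flowToKostant]
  split
  · rename_i hij
    rw [ktf_castSucc c i j hij]
  · rename_i hij
    exact (hz i j (not_le.mp hij)).symm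

/-- The key cut-sum identity. -/
lemma cut_sum {n : ℕ} (f : Fin (n + 1) → Fin (n + 1) → ℕ)
    (hz : ∀ i j : Fin (n + 1), ¬i < j → f i j = 0) (m : Fin n) :
    (∑ k : Fin n, if k ≤ m then
        ((∑ j : Fin (n + 1), if k.castSucc < j then (f k.castSucc j : ℤ) else 0) -
          (∑ i : Fin (n + 1), if i < k.castSucc then (f i k.castSucc : ℤ) else 0)) else 0)
      = ∑ i : Fin n, ∑ j : Fin n,
          (if i ≤ m ∧ m ≤ j then (f i.castSucc j.succ : ℤ) else 0) := by
  set G : Fin (n + 1) → ℤ :=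
    fun y => ∑ i : Fin (n + 1), if y ≤ m.castSucc ∧ i < y then (f i y : ℤ) else 0 with hG
  set A : Fin (n + 1) → ℤ :=
    fun x => ∑ j : Fin (n + 1), if x ≤ m.castSucc ∧ x < j then (f x j : ℤ) else 0 with hAdef
  have hmlast := Fin.lt_def.mp (Fin.castSucc_lt_last m)
  have step1 : (∑ k : Fin n, if k ≤ m then
        ((∑ j : Fin (n + 1), if k.castSucc < j then (f k.castSucc j : ℤ) else 0) -
          (∑ i : Fin (n + 1), if i < k.castSucc then (f i k.castSucc : ℤ) else 0)) else 0)
      = (∑ k : Fin n, A k.castSucc) - (∑ k : Fin n, G k.castSucc) := by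
    rw [← Finset.sum_sub_distrib]
    refine Finset.sum_congr rfl fun k _ => ?_
    simp only [hAdef, hG, Fin.castSucc_le_castSucc_iff]
    by_cases hk : k ≤ m
    · simp [hk]
    · simp [hk]
  rw [step1]
  have hAlast : A (Fin.last n) = 0 := by
    simp only [hAdef]
    refine Finset.sum_eq_zero fun j _ => if_neg ?_
    rintro ⟨h1, -⟩
    have := Fin.le_def.mp h1
    omega
  have hGlast : G (Fin.last n) = 0 := by
    simp only [hG]
    refine Finset.sum_eq_zero fun i _ => if_neg ?_
    rintro ⟨h1, -⟩
    have := Fin.le_def.mp h1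
    omega
  have hA : (∑ k : Fin n, A k.castSucc) = ∑ x : Fin (n + 1), A x := by
    rw [Fin.sum_univ_castSucc (f := A), hAlast, add_zero]
  have hGsum : (∑ k : Fin n, G k.castSucc) = ∑ y : Fin (n + 1), G y := by
    rw [Fin.sum_univ_castSucc (f := G), hGlast, add_zero]
  rw [hA, hGsum]
  have hGcomm : (∑ y : Fin (n + 1), G y)
      = ∑ x : Fin (n + 1), ∑ y : Fin (n + 1),
          if y ≤ m.castSucc ∧ x < y then (f x y : ℤ) else 0 := by
    simp only [hG]
    exact Finset.sum_comm
  rw [hGcomm]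
  have pointwise : ∀ i j : Fin (n + 1),
      (if i ≤ m.castSucc ∧ i < j then (f i j : ℤ) else 0)
        - (if j ≤ m.castSucc ∧ i < j then (f i j : ℤ) else 0)
      = if i ≤ m.castSucc ∧ m.castSucc < j then (f i j : ℤ) else 0 := by
    intro i j
    by_cases hij : i < j
    · simp only [Fin.lt_def, Fin.le_def] at *
      split_ifs <;> omega
    · have h0 : f i j = 0 := hz i j hij
      simp only [Fin.lt_def, Fin.le_def, h0] at *
      split_ifs <;> omega
  have step2 : (∑ x : Fin (n + 1), A x) - (∑ x : Fin (n + 1), ∑ y : Fin (n + 1),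
        if y ≤ m.castSucc ∧ x < y then (f x y : ℤ) else 0)
      = ∑ i : Fin (n + 1), ∑ j : Fin (n + 1),
        if i ≤ m.castSucc ∧ m.castSucc < j then (f i j : ℤ) else 0 := by
    rw [← Finset.sum_sub_distrib]
    refine Finset.sum_congr rfl fun i _ => ?_
    simp only [hAdef]
    rw [← Finset.sum_sub_distrib]
    exact Finset.sum_congr rfl fun j _ => pointwise i j
  rw [step2]
  rw [Fin.sum_univ_castSucc (f := fun i : Fin (n + 1) => ∑ j : Fin (n + 1),
    if i ≤ m.castSucc ∧ m.castSucc < j then (f i j : ℤ) else 0)]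
  have hlast : (∑ j : Fin (n + 1),
      if Fin.last n ≤ m.castSucc ∧ m.castSucc < j then (f (Fin.last n) j : ℤ) else 0) = 0 := by
    refine Finset.sum_eq_zero fun j _ => if_neg ?_
    rintro ⟨h1, -⟩
    have := Fin.le_def.mp h1
    omega
  rw [hlast, add_zero]
  refine Finset.sum_congr rfl fun i _ => ?_
  rw [Fin.sum_univ_succ (f := fun j : Fin (n + 1) =>
    if i.castSucc ≤ m.castSucc ∧ m.castSucc < j then (f i.castSucc j : ℤ) else 0)]
  have h0 : (if i.castSucc ≤ m.castSucc ∧ m.castSucc < (0 : Fin (n + 1))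
      then (f i.castSucc 0 : ℤ) else 0) = 0 := by
    refine if_neg ?_
    rintro ⟨-, h2⟩
    exact absurd h2 (Fin.not_lt_zero _)
  rw [h0, zero_add]
  refine Finset.sum_congr rfl fun j _ => ?_
  simp only [Fin.castSucc_le_castSucc_iff, Fin.castSucc_lt_succ_iff]

/-- If two sequences have equal partial sums, they are equal. -/
lemma eq_of_partial_sums {n : ℕ} (a b : Fin n → ℤ)
    (H : ∀ m : Fin n, (∑ k : Fin n, if k ≤ m then a k else 0)
      = ∑ k : Fin n, if k ≤ m then b k else 0) :
    ∀ m : Fin n, a m = b m := by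
  have key : ∀ N : ℕ, ∀ m : Fin n, m.val = N → a m = b m := by
    intro N
    induction N using Nat.strong_induction_on with
    | _ N IH =>
      intro m hm
      have hsplit : ∀ c : Fin n → ℤ, (∑ k : Fin n, if k ≤ m then c k else 0)
          = (∑ k : Fin n, if k < m then c k else 0) + c m := by
        intro c
        have pt : ∀ k : Fin n, (if k ≤ m then c k else 0)
            = (if k < m then c k else 0) + (if k = m then c k else 0) := by
          intro k
          rcases lt_trichotomy k m with hh | hh | hh
          · simp [hh, hh.le, hh.ne]
          · simp [hh]
          · simp [hh.ne', not_le.mpr hh, not_lt.mpr hh.le]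
        rw [Finset.sum_congr rfl fun k _ => pt k, Finset.sum_add_distrib,
          Finset.sum_ite_eq' Finset.univ m c, if_pos (Finset.mem_univ m)]
      have hpre : (∑ k : Fin n, if k < m then a k else 0)
          = ∑ k : Fin n, if k < m then b k else 0 := by
        refine Finset.sum_congr rfl fun k _ => ?_
        by_cases hk : k < m
        · have hkv : k.val < N := by rw [← hm]; exact Fin.lt_def.mp hk
          have := IH k.val hkv k rfl
          simp [hk, this]
        · simp [hk]
      have hH := H m
      rw [hsplit a, hsplit b, hpre] at hH
      exact add_left_cancel hH
  exact fun m => key m.val m rfl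

/-- Flow covers map to Kostant covers. -/
lemma flowCover_to {n : ℕ} (f' f : Fin (n + 1) → Fin (n + 1) → ℕ) (hc : FlowCover f' f) :
    KostantCover (flowToKostant f') (flowToKostant f) := by
  obtain ⟨i, j, k, hij, hjk, e1, e2, e3, helse⟩ := hc
  have hij' := Fin.lt_def.mp hij
  have hjk' := Fin.lt_def.mp hjk
  have hk' := k.isLt
  have hI : i.val < n := by omega
  have hJ : j.val - 1 < n := by omega
  have hJ1 : (j.val - 1) + 1 < n := by omega
  have hK : k.val - 1 < n := by omega
  have hJ' : j.val < n := by omega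
  refine ⟨i.val, j.val - 1, k.val - 1, hI, hJ, hJ1, hK, by omega, by omega, ?_, ?_, ?_, ?_⟩
  · rw [ftk_mk f i j hij hI hJ, ftk_mk f' i j hij hI hJ]; omega
  · have emk : (⟨j.val - 1 + 1, hJ1⟩ : Fin n) = ⟨j.val, hJ'⟩ := Fin.ext (by simp; omega)
    rw [emk, ftk_mk f j k hjk hJ' hK, ftk_mk f' j k hjk hJ' hK]; omega
  · rw [ftk_mk f i k (hij.trans hjk) hI hK, ftk_mk f' i k (hij.trans hjk) hI hK]; omega
  · intro p q hp1 hp2 hp3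
    simp only [flowToKostant]
    by_cases hpq : p ≤ q
    · rw [if_pos hpq, if_pos hpq]
      have hpv : (p.castSucc : ℕ) = p.val := rfl
      have hqv : (q.succ : ℕ) = q.val + 1 := rfl
      refine (helse p.castSucc q.succ ?_ ?_ ?_).symm
      · intro hcon
        apply hp1
        rw [Prod.mk.injEq] at hcon ⊢
        obtain ⟨c1, c2⟩ := hcon
        have v1 : p.val = i.val := by rw [← c1]; rfl
        have v2 : q.val + 1 = j.val := by rw [← c2]; rfl
        exact ⟨v1, by omega⟩
      · intro hcon
        apply hp2
        rw [Prod.mk.injEq] at hcon ⊢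
        obtain ⟨c1, c2⟩ := hcon
        have v1 : p.val = j.val := by rw [← c1]; rfl
        have v2 : q.val + 1 = k.val := by rw [← c2]; rfl
        exact ⟨by omega, by omega⟩
      · intro hcon
        apply hp3
        rw [Prod.mk.injEq] at hcon ⊢
        obtain ⟨c1, c2⟩ := hcon
        have v1 : p.val = i.val := by rw [← c1]; rfl
        have v2 : q.val + 1 = k.val := by rw [← c2]; rfl
        exact ⟨v1, by omega⟩
    · rw [if_neg hpq, if_neg hpq]

/-- Kostant covers map to flow covers. -/
lemma kostantCover_to {n : ℕ} (b a : Fin n → Fin n → ℕ) (hc : KostantCover b a) :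
    FlowCover (kostantToFlow b) (kostantToFlow a) := by
  obtain ⟨i, j, k, hi, hj, hj1, hk, hij, hjk, e1, e2, e3, helse⟩ := hc
  refine ⟨⟨i, by omega⟩, ⟨j + 1, by omega⟩, ⟨k + 1, by omega⟩,
    by simp only [Fin.lt_def]; omega, by simp only [Fin.lt_def]; omega, ?_, ?_, ?_, ?_⟩
  · rw [ktf_mk a hi hj hij, ktf_mk b hi hj hij]; omega
  · rw [ktf_mk a hj1 hk (by omega), ktf_mk b hj1 hk (by omega)]; omega
  · rw [ktf_mk a hi hk (by omega), ktf_mk b hi hk (by omega)]; omega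
  · intro p q hp1 hp2 hp3
    by_cases hpq : p < q
    · have hv := Fin.lt_def.mp hpq
      have hq := q.isLt
      simp only [kostantToFlow, dif_pos hpq]
      refine (helse ⟨p.val, by omega⟩ ⟨q.val - 1, by omega⟩ ?_ ?_ ?_).symm
      · intro hcon
        apply hp1
        rw [Prod.mk.injEq] at hcon ⊢
        obtain ⟨c1, c2⟩ := hcon
        simp only at c1 c2
        exact ⟨Fin.ext c1, Fin.ext (by simp; omega)⟩
      · intro hcon
        apply hp2
        rw [Prod.mk.injEq] at hcon ⊢
        obtain ⟨c1, c2⟩ := hcon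
        simp only at c1 c2
        exact ⟨Fin.ext c1, Fin.ext (by simp; omega)⟩
      · intro hcon
        apply hp3
        rw [Prod.mk.injEq] at hcon ⊢
        obtain ⟨c1, c2⟩ := hcon
        simp only at c1 c2
        exact ⟨Fin.ext c1, Fin.ext (by simp; omega)⟩
    · simp only [kostantToFlow, dif_neg hpq]


/-- `Φ` is a bijection from `I(h)` onto the Kostant pictures of height
`η = (h₁, h₁+h₂, …)`, and an isomorphism from the merge order on `I(h)` to the merge
order on Kostant pictures. -/
theorem flow_kostant_order_iso {n : ℕ} (h : Fin n → ℤ)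
    (hpos : ∀ m : Fin n, 0 ≤ ∑ i : Fin n, if i ≤ m then h i else 0) :
    Set.BijOn flowToKostant {f | IsFlow h f}
      {c | IsKostant (fun m : Fin n => (∑ i : Fin n, if i ≤ m then h i else 0).toNat) c} ∧
    ∀ f f' : Fin (n + 1) → Fin (n + 1) → ℕ, IsFlow h f → IsFlow h f' →
      (Relation.ReflTransGen FlowCover f' f ↔
        Relation.ReflTransGen KostantCover (flowToKostant f') (flowToKostant f)) := by
  constructor
  · refine ⟨?_, ?_, ?_⟩
    · -- MapsTo
      intro f hf
      obtain ⟨hz, heq⟩ := hf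
      constructor
      · intro i j hji
        simp [flowToKostant, not_le.mpr hji]
      · intro m
        have key := cut_sum f hz m
        have key2 : (∑ k : Fin n, if k ≤ m then
            ((∑ j : Fin (n + 1), if k.castSucc < j then (f k.castSucc j : ℤ) else 0) -
              (∑ i : Fin (n + 1), if i < k.castSucc then (f i k.castSucc : ℤ) else 0)) else 0)
            = ∑ k : Fin n, if k ≤ m then h k else 0 := by
          refine Finset.sum_congr rfl fun k _ => ?_
          by_cases hk : k ≤ m
          · rw [if_pos hk, if_pos hk, heq k]
          · rw [if_neg hk, if_neg hk]
        rw [key2] at key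
        have cast_eq : ((∑ i : Fin n, ∑ j : Fin n,
            if i ≤ m ∧ m ≤ j then flowToKostant f i j else 0 : ℕ) : ℤ)
            = ∑ i : Fin n, ∑ j : Fin n,
              (if i ≤ m ∧ m ≤ j then (f i.castSucc j.succ : ℤ) else 0) := by
          push_cast
          refine Finset.sum_congr rfl fun i _ => Finset.sum_congr rfl fun j _ => ?_
          by_cases hcnd : i ≤ m ∧ m ≤ j
          · rw [if_pos hcnd, if_pos hcnd]
            simp [flowToKostant, le_trans hcnd.1 hcnd.2]
          · rw [if_neg hcnd, if_neg hcnd]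
        rw [← key] at cast_eq
        have hp := hpos m
        show _ = (∑ i : Fin n, if i ≤ m then h i else 0).toNat
        omega
    · -- InjOn
      intro f hf f' hf' heq
      have := congrArg kostantToFlow heq
      rwa [kostant_flow_inv f hf.1, kostant_flow_inv f' hf'.1] at this
    · -- SurjOn
      intro c hc
      obtain ⟨htri, hhgt⟩ := hc
      have hz : ∀ i j : Fin (n + 1), ¬i < j → kostantToFlow c i j = 0 := by
        intro i j hij
        simp [kostantToFlow, hij]
      refine ⟨kostantToFlow c, ⟨hz, ?_⟩, flow_kostant_inv c htri⟩
      apply eq_of_partial_sums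
      intro m
      have key := cut_sum (kostantToFlow c) hz m
      rw [key]
      have cast_eq : (∑ i : Fin n, ∑ j : Fin n,
          (if i ≤ m ∧ m ≤ j then ((kostantToFlow c) i.castSucc j.succ : ℤ) else 0))
          = ((∑ i : Fin n, ∑ j : Fin n, if i ≤ m ∧ m ≤ j then c i j else 0 : ℕ) : ℤ) := by
        push_cast
        refine Finset.sum_congr rfl fun i _ => Finset.sum_congr rfl fun j _ => ?_
        by_cases hcnd : i ≤ m ∧ m ≤ j
        · rw [if_pos hcnd, if_pos hcnd, ktf_castSucc c i j (le_trans hcnd.1 hcnd.2)]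
        · rw [if_neg hcnd, if_neg hcnd]
      rw [cast_eq, hhgt m]
      have hp := hpos m
      show (((∑ i : Fin n, if i ≤ m then h i else 0).toNat : ℕ) : ℤ) = _
      omega
  · intro f f' hf hf'
    constructor
    · intro hrt
      exact hrt.lift flowToKostant (fun x y hxy => flowCover_to x y hxy)
    · intro hrt
      have : Relation.ReflTransGen FlowCover (kostantToFlow (flowToKostant f'))
          (kostantToFlow (flowToKostant f)) := hrt.lift kostantToFlow
        (fun x y hxy => kostantCover_to x y hxy)
      rwa [kostant_flow_inv f hf.1, kostant_flow_inv f' hf'.1] at this
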